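/- Let h(x,y,z) ∈ ℝ[x,y,z] be a sum-of-squares polynomial of degree at most 2 in x = (x₁,…,x_d), y = (y₁,…,y_u), z = (z₁,…,z_v) in which the coefficient of every monomial y_i z_j (1 ≤ i ≤ u, 1 ≤ j ≤ v) is zero. Then h can be written in the triangular form h = Σ_{i=1}^u a_i (y_i − l_i(x, y_{i+1},…,y_u))² + Σ_{j=1}^v a_{u+j} (z_j − l_{u+j}(x, z_{j+1},…,z_v))² + Σ_{k=1}^d a_{u+v+k} (x_k − l_{u+v+k}(x_{k+1},…,x_d))² + a_{u+v+d+1}, where a₁,…,a_{u+v+d+1} ≥ 0 and each l_m is an affine function of the indicated variables (l_{u+v+d} being a constant). -/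

import Mathlib

open MvPolynomial

/-- A polynomial is a sum of squares. -/
def IsSOS {σ : Type*} (p : MvPolynomial σ ℝ) : Prop :=
  ∃ (k : ℕ) (q : Fin k → MvPolynomial σ ℝ), p = ∑ i, (q i) ^ 2

open Finset Pointwise

variable {σ : Type*} [DecidableEq σ]




private lemma eval_update_of_not_mem_vars {p : MvPolynomial σ ℝ} {w : σ} (hw : w ∉ p.vars)
    (x : σ → ℝ) (t : ℝ) : eval (Function.update x w t) p = eval x p := by
  have := eval₂Hom_congr' (f₁ := RingHom.id ℝ) (f₂ := RingHom.id ℝ)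
    (g₁ := Function.update x w t) (g₂ := x) (p₁ := p) (p₂ := p) rfl ?_ rfl
  · simpa using this
  · intro i hi _
    apply Function.update_of_ne
    intro hh
    exact hw (hh ▸ hi)

private lemma quad_a_nonneg {a b c : ℝ} (h : ∀ t : ℝ, 0 ≤ a * t ^ 2 + b * t + c) : 0 ≤ a := by
  by_contra ha
  push_neg at ha
  set s := (|b| + |c| + 1) / (-a) with hsdef
  have hspos : 0 < s := div_pos (by positivity) (by linarith)
  have hs : a * s = -(|b| + |c| + 1) := by
    have hane : a ≠ 0 := ne_of_lt ha
    rw [hsdef, div_neg, mul_neg, mul_div_cancel₀ _ hane]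
  have key : 0 ≤ s * (|b| + |c| + 1 - b) :=
    mul_nonneg hspos.le (by nlinarith [le_abs_self b, abs_nonneg c])
  have ht := h (s + 1)
  have hsq : a * (s + 1) ^ 2 + b * (s + 1) + c
      = (a * s) * s + 2 * (a * s) + a + b * s + b + c := by ring
  rw [hsq, hs] at ht
  nlinarith [le_abs_self b, le_abs_self c, abs_nonneg b, abs_nonneg c]

private lemma lin_zero {b c : ℝ} (h : ∀ t : ℝ, 0 ≤ b * t + c) : b = 0 := by
  by_contra hb
  have := h ((-(c + 1)) / b)
  rw [mul_div_cancel₀ _ hb] at this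
  linarith

private lemma sum_finset_le (m : σ →₀ ℕ) (s : Finset σ) :
    ∑ v ∈ s, m v ≤ m.sum fun _ n => n := by
  rw [Finsupp.sum]
  rw [← Finset.sum_filter_ne_zero (s := s) (f := fun v => m v)]
  apply Finset.sum_le_sum_of_subset
  intro v hv
  simp only [Finset.mem_filter] at hv
  exact Finsupp.mem_support_iff.2 hv.2

private lemma eq_single_add_single {m : σ →₀ ℕ} {aa bb : σ} (hab : aa ≠ bb)
    (ha : m aa ≠ 0) (hb : m bb ≠ 0) (hs : (m.sum fun _ n => n) ≤ 2) :
    m = Finsupp.single aa 1 + Finsupp.single bb 1 := by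
  have hpair : m aa + m bb ≤ 2 := by
    have h2 := sum_finset_le m {aa, bb}
    rw [Finset.sum_pair hab] at h2
    exact h2.trans hs
  have haa : m aa = 1 := by omega
  have hbb : m bb = 1 := by omega
  ext v
  rcases eq_or_ne v aa with rfl | hva
  · simp [haa, Finsupp.single_eq_of_ne' hab.symm]
  rcases eq_or_ne v bb with rfl | hvb
  · simp [hbb, Finsupp.single_eq_of_ne' hab]
  have htr : m aa + (m bb + m v) ≤ 2 := by
    have h3 := sum_finset_le m {aa, bb, v}
    rw [Finset.sum_insert (by simp [hab, Ne.symm hva]), Finset.sum_pair (Ne.symm hvb)] at h3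
    exact h3.trans hs
  have hv0 : m v = 0 := by omega
  simp [hv0, Finsupp.single_eq_of_ne' (Ne.symm hva), Finsupp.single_eq_of_ne' (Ne.symm hvb)]

private lemma complete_square (p : MvPolynomial σ ℝ) (w : σ)
    (hdeg : p.totalDegree ≤ 2) (hpos : ∀ x : σ → ℝ, 0 ≤ eval x p) :
    ∃ (a : ℝ) (l r : MvPolynomial σ ℝ),
      0 ≤ a ∧ l.totalDegree ≤ 1 ∧
      (∀ v ∈ l.vars, v ≠ w ∧ ∃ m ∈ p.support, m w ≠ 0 ∧ m v ≠ 0) ∧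
      r.totalDegree ≤ 2 ∧ (∀ x : σ → ℝ, 0 ≤ eval x r) ∧
      (∀ m ∈ r.support, m w = 0) ∧
      (∀ m ∈ r.support, m ∈ p.support ∨ ∀ v, m v ≠ 0 → v ∈ l.vars) ∧
      p = C a * (X w - l) ^ 2 + r := by
  classical
  set c : ℝ := coeff (Finsupp.single w 2) p with hc
  set q : MvPolynomial σ ℝ :=
    ∑ m ∈ p.support.filter (fun m => m w = 1),
      monomial (m - Finsupp.single w 1) (coeff m p) with hqdef
  set r0 : MvPolynomial σ ℝ :=
    ∑ m ∈ p.support.filter (fun m => m w = 0), monomial m (coeff m p) with hr0def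
  have hmsum : ∀ m ∈ p.support, (m.sum fun _ n => n) ≤ 2 :=
    fun m hm => (le_totalDegree hm).trans hdeg
  have hmw : ∀ m ∈ p.support, m w ≤ 2 := by
    intro m hm
    have h1 := sum_finset_le m {w}
    rw [Finset.sum_singleton] at h1
    exact h1.trans (hmsum m hm)
  -- the three-way splitting
  have hA1 : p = C c * X w ^ 2 + X w * q + r0 := by
    have e0 : (p.support.filter fun m => ¬ m w = 0).filter (fun m => m w = 1)
        = p.support.filter fun m => m w = 1 := by
      rw [Finset.filter_filter]
      apply Finset.filter_congr
      intro m _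
      constructor
      · exact fun hh => hh.2
      · exact fun hh => ⟨by omega, hh⟩
    have h1sum : ∑ m ∈ p.support.filter (fun m => m w = 1), monomial m (coeff m p)
        = X w * q := by
      rw [hqdef, Finset.mul_sum]
      apply Finset.sum_congr rfl
      intro m hm
      simp only [Finset.mem_filter] at hm
      have hle : Finsupp.single w 1 ≤ m := by
        rw [Finsupp.single_le_iff]; omega
      calc monomial m (coeff m p)
          = monomial (Finsupp.single w 1 + (m - Finsupp.single w 1)) (coeff m p) := by
            rw [add_tsub_cancel_of_le hle]
        _ = X w ^ 1 * monomial (m - Finsupp.single w 1) (coeff m p) := monomial_single_add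
        _ = X w * monomial (m - Finsupp.single w 1) (coeff m p) := by rw [pow_one]
    have hsub : (p.support.filter fun m => ¬ m w = 0).filter (fun m => ¬ m w = 1)
        ⊆ {Finsupp.single w 2} := by
      intro m hm
      simp only [Finset.filter_filter, Finset.mem_filter] at hm
      obtain ⟨hmem, h0, h1⟩ := hm
      have h2 : m w = 2 := by have := hmw m hmem; omega
      rw [Finset.mem_singleton]
      ext v
      rcases eq_or_ne v w with rfl | hv
      · simp [h2]
      · have hp2 : m w + m v ≤ 2 := by
          have := sum_finset_le m {w, v}
          rw [Finset.sum_pair (Ne.symm hv)] at this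
          exact this.trans (hmsum m hmem)
        have hv0 : m v = 0 := by omega
        simp [hv0, Finsupp.single_eq_of_ne' (Ne.symm hv)]
    have h2sum : ∑ m ∈ (p.support.filter fun m => ¬ m w = 0).filter (fun m => ¬ m w = 1),
        monomial m (coeff m p) = C c * X w ^ 2 := by
      rw [C_mul_X_pow_eq_monomial]
      rcases Finset.subset_singleton_iff.1 hsub with hemp | hsing
      · rw [hemp, Finset.sum_empty]
        have hc0 : c = 0 := by
          by_contra hne
          have hmem : Finsupp.single w 2 ∈ p.support := by
            rw [mem_support_iff]; exact hne
          have hin : Finsupp.single w 2 ∈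
              (p.support.filter fun m => ¬ m w = 0).filter (fun m => ¬ m w = 1) := by
            simp [Finset.mem_filter, hmem, Finsupp.single_eq_same]
          rw [hemp] at hin
          simp at hin
        rw [hc0, monomial_zero]
      · rw [hsing, Finset.sum_singleton]
    conv_lhs => rw [p.as_sum]
    rw [← Finset.sum_filter_add_sum_filter_not p.support (fun m => m w = 0)
      (fun m => monomial m (coeff m p))]
    rw [← Finset.sum_filter_add_sum_filter_not (p.support.filter (fun m => ¬ m w = 0))
      (fun m => m w = 1) (fun m => monomial m (coeff m p))]
    rw [e0, h1sum, h2sum, ← hr0def]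
    ring
  -- properties of q
  have hqsupp : ∀ m' ∈ q.support, ∃ m ∈ p.support, m w = 1 ∧ m' = m - Finsupp.single w 1 := by
    intro m' hm'
    have hsub := MvPolynomial.support_sum (s := p.support.filter (fun m => m w = 1))
      (f := fun m => monomial (m - Finsupp.single w 1) (coeff m p))
    rw [hqdef] at hm'
    have := hsub hm'
    rw [Finset.mem_biUnion] at this
    obtain ⟨m, hm, hmm⟩ := this
    have := support_monomial_subset hmm
    rw [Finset.mem_singleton] at this
    simp only [Finset.mem_filter] at hm
    exact ⟨m, hm.1, hm.2, this⟩
  have hq1 : ∀ m' ∈ q.support, m' w = 0 ∧ (m'.sum fun _ n => n) ≤ 1 := by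
    intro m' hm'
    obtain ⟨m, hm, hw1, rfl⟩ := hqsupp m' hm'
    have hle : Finsupp.single w 1 ≤ m := by rw [Finsupp.single_le_iff]; omega
    have hmeq : Finsupp.single w 1 + (m - Finsupp.single w 1) = m := add_tsub_cancel_of_le hle
    constructor
    · rw [Finsupp.tsub_apply, Finsupp.single_eq_same, hw1]
    · have hsum := Finsupp.sum_add_index' (M := ℕ) (N := ℕ) (h := fun _ n => n)
        (f := Finsupp.single w 1) (g := m - Finsupp.single w 1)
        (fun _ => rfl) (fun _ _ _ => rfl)
      rw [hmeq, Finsupp.sum_single_index rfl] at hsum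
      have := hmsum m hm
      omega
  have hqvars : ∀ v ∈ q.vars, v ≠ w ∧ ∃ m ∈ p.support, m w ≠ 0 ∧ m v ≠ 0 := by
    intro v hv
    rw [mem_vars] at hv
    obtain ⟨m', hm', hvm'⟩ := hv
    rw [Finsupp.mem_support_iff] at hvm'
    have h1 := hq1 m' hm'
    obtain ⟨m, hm, hw1, hmeq⟩ := hqsupp m' hm'
    constructor
    · intro hvw; rw [hvw] at hvm'; exact hvm' h1.1
    · refine ⟨m, hm, by omega, ?_⟩
      have hle : Finsupp.single w 1 ≤ m := by rw [Finsupp.single_le_iff]; omega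
      have : m' v ≤ m v := by
        rw [hmeq, Finsupp.tsub_apply]
        omega
      omega
  have hqnv : w ∉ q.vars := fun hw => (hqvars w hw).1 rfl
  have hqdeg : q.totalDegree ≤ 1 := Finset.sup_le fun m' hm' => (hq1 m' hm').2
  -- properties of r0
  have hr0supp : ∀ m ∈ r0.support, m ∈ p.support ∧ m w = 0 := by
    intro m' hm'
    have hsub := MvPolynomial.support_sum (s := p.support.filter (fun m => m w = 0))
      (f := fun m => monomial m (coeff m p))
    rw [hr0def] at hm'
    have := hsub hm'
    rw [Finset.mem_biUnion] at this
    obtain ⟨m, hm, hmm⟩ := this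
    have := support_monomial_subset hmm
    rw [Finset.mem_singleton] at this
    subst this
    simpa using hm
  have hr0nv : w ∉ r0.vars := by
    intro hw
    rw [mem_vars] at hw
    obtain ⟨m, hm, hwm⟩ := hw
    rw [Finsupp.mem_support_iff] at hwm
    exact hwm (hr0supp m hm).2
  have hr0deg : r0.totalDegree ≤ 2 :=
    Finset.sup_le fun m hm => (le_totalDegree ((hr0supp m hm).1)).trans hdeg
  -- evaluation formula
  have hA3 : ∀ (x : σ → ℝ) (t : ℝ),
      eval (Function.update x w t) p = c * t ^ 2 + eval x q * t + eval x r0 := by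
    intro x t
    conv_lhs => rw [hA1]
    simp only [map_add, map_mul, map_pow, eval_C, eval_X]
    rw [Function.update_self, eval_update_of_not_mem_vars hqnv, eval_update_of_not_mem_vars hr0nv]
    ring
  have hc_nonneg : 0 ≤ c := by
    apply quad_a_nonneg (b := eval (fun _ => 0) q) (c := eval (fun _ => 0) r0)
    intro t
    rw [← hA3]
    exact hpos _
  rcases eq_or_lt_of_le hc_nonneg with hczero | hcpos
  · -- degenerate case
    have hq0 : q = 0 := by
      apply MvPolynomial.funext
      intro x
      rw [map_zero]
      apply lin_zero (c := eval x r0)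
      intro t
      have := hpos (Function.update x w t)
      rw [hA3, ← hczero] at this
      simpa using this
    have hpr0 : p = r0 := by
      rw [hA1, ← hczero, hq0]; simp
    refine ⟨0, 0, r0, le_refl 0, by simp, by simp, hr0deg, ?_, fun m hm => (hr0supp m hm).2,
      fun m hm => Or.inl (hr0supp m hm).1, ?_⟩
    · intro x; rw [← hpr0]; exact hpos x
    · rw [hpr0]; simp
  · -- main case
    have hc' : c ≠ 0 := ne_of_gt hcpos
    set e : ℝ := -(1/(2*c)) with hedef
    have he' : e ≠ 0 := by rw [hedef, neg_ne_zero]; positivity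
    set l : MvPolynomial σ ℝ := C e * q with hldef
    set r : MvPolynomial σ ℝ := r0 - C (1/(4*c)) * q ^ 2 with hrdef
    have e1' : (2 : MvPolynomial σ ℝ) * (C c * C e) = -1 := by
      rw [← C_mul, (map_ofNat (C : ℝ →+* MvPolynomial σ ℝ) 2).symm,
        ← C_mul, show ((-1 : MvPolynomial σ ℝ)) = C (-1) by simp]
      congr 1
      rw [hedef]
      field_simp
    have e2 : C c * (C e * C e) = (C (1/(4*c)) : MvPolynomial σ ℝ) := by
      rw [← C_mul, ← C_mul]
      congr 1
      rw [hedef]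
      field_simp
      ring
    have heq : p = C c * (X w - l) ^ 2 + r := by
      rw [hA1, hldef, hrdef]
      linear_combination (X w * q) * e1' + (- q^2) * e2
    have hsupl : l.support = q.support := by
      ext m
      rw [hldef]
      simp only [mem_support_iff, coeff_C_mul]
      constructor
      · intro hh h0; exact hh (by rw [h0, mul_zero])
      · exact fun hh => mul_ne_zero he' hh
    have hlvars : l.vars = q.vars := by
      ext v
      rw [mem_vars, mem_vars, hsupl]
    have hq2 : ∀ m ∈ (q ^ 2).support, m w = 0 ∧ ∀ v, m v ≠ 0 → v ∈ q.vars := by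
      intro m hm
      rw [pow_two] at hm
      have := MvPolynomial.support_mul q q hm
      rw [Finset.mem_add] at this
      obtain ⟨m1, hm1, m2, hm2, rfl⟩ := this
      constructor
      · have h1 := (hq1 m1 hm1).1
        have h2 := (hq1 m2 hm2).1
        rw [Finsupp.add_apply, h1, h2]
      · intro v hv
        rw [Finsupp.add_apply] at hv
        rw [mem_vars]
        rcases Nat.eq_zero_or_pos (m1 v) with h1 | h1
        · exact ⟨m2, hm2, Finsupp.mem_support_iff.2 (by omega)⟩
        · exact ⟨m1, hm1, Finsupp.mem_support_iff.2 (by omega)⟩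
    have hrsupp : ∀ m ∈ r.support, m ∈ r0.support ∨ m ∈ (q ^ 2).support := by
      intro m hm
      rw [mem_support_iff] at hm
      by_contra hcon
      push_neg at hcon
      obtain ⟨h1, h2⟩ := hcon
      rw [notMem_support_iff] at h1 h2
      rw [hrdef, coeff_sub, coeff_C_mul, h1, h2, mul_zero, sub_zero] at hm
      exact hm rfl
    have hrw' : ∀ m ∈ r.support, m w = 0 := by
      intro m hm
      rcases hrsupp m hm with h | h
      · exact (hr0supp m h).2
      · exact (hq2 m h).1
    have hrnv : w ∉ r.vars := by
      intro hw
      rw [mem_vars] at hw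
      obtain ⟨m, hm, hwm⟩ := hw
      rw [Finsupp.mem_support_iff] at hwm
      exact hwm (hrw' m hm)
    have hlnv : w ∉ l.vars := by rw [hlvars]; exact hqnv
    have hldeg : l.totalDegree ≤ 1 := by
      refine (totalDegree_mul _ _).trans ?_
      rw [totalDegree_C]
      simpa using hqdeg
    have hrdeg : r.totalDegree ≤ 2 := by
      refine (totalDegree_sub _ _).trans (max_le hr0deg ?_)
      refine (totalDegree_mul _ _).trans ?_
      rw [totalDegree_C]
      simp only [zero_add]
      refine (totalDegree_pow _ _).trans ?_
      omega
    have hrnonneg : ∀ x : σ → ℝ, 0 ≤ eval x r := by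
      intro x
      have h0 := hpos (Function.update x w (eval x l))
      rw [heq] at h0
      simp only [map_add, map_mul, map_pow, map_sub, eval_C, eval_X] at h0
      rw [Function.update_self, eval_update_of_not_mem_vars hlnv,
        eval_update_of_not_mem_vars hrnv, sub_self] at h0
      simpa using h0
    refine ⟨c, l, r, hc_nonneg, hldeg, ?_, hrdeg, hrnonneg, hrw', ?_, heq⟩
    · intro v hv
      rw [hlvars] at hv
      exact hqvars v hv
    · intro m hm
      rcases hrsupp m hm with h | h
      · exact Or.inl (hr0supp m h).1
      · refine Or.inr fun v hv => ?_
        rw [hlvars]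
        exact (hq2 m h).2 v hv

private lemma elim_block {σ : Type*} [DecidableEq σ] (S : Set σ) :
    ∀ (n : ℕ) (g : Fin n → σ) (p : MvPolynomial σ ℝ),
      p.totalDegree ≤ 2 → (∀ x : σ → ℝ, 0 ≤ eval x p) →
      (∀ m ∈ p.support, ∀ i : Fin n, m (g i) ≠ 0 → ∀ s ∈ S, m s = 0) →
      ∃ (a : Fin n → ℝ) (l : Fin n → MvPolynomial σ ℝ) (r : MvPolynomial σ ℝ),
        (∀ i, 0 ≤ a i) ∧ (∀ i, (l i).totalDegree ≤ 1) ∧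
        (∀ i, ∀ w ∈ (l i).vars, w ∈ p.vars ∧ w ∉ S ∧ ∀ i' : Fin n, i' ≤ i → w ≠ g i') ∧
        r.totalDegree ≤ 2 ∧ (∀ x : σ → ℝ, 0 ≤ eval x r) ∧
        (∀ w ∈ r.vars, w ∈ p.vars ∧ ∀ i, w ≠ g i) ∧
        p = (∑ i, C (a i) * (X (g i) - l i) ^ 2) + r := by
  intro n
  induction n with
  | zero =>
    intro g p hdeg hpos _
    exact ⟨fun _ => 0, fun _ => 0, p, fun i => i.elim0, fun i => i.elim0, fun i => i.elim0,
      hdeg, hpos, fun w hw => ⟨hw, fun i => i.elim0⟩, by simp⟩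
  | succ n ih =>
    intro g p hdeg hpos hmix
    obtain ⟨a₀, l₀, r₁, ha₀, hl₀deg, hl₀v, hr₁deg, hr₁pos, hr₁w, hr₁s, heq₀⟩ :=
      complete_square p (g 0) hdeg hpos
    -- derived facts
    have hl₀vars : ∀ v ∈ l₀.vars, v ∈ p.vars ∧ v ∉ S ∧ v ≠ g 0 := by
      intro v hv
      obtain ⟨hvw, m, hm, hmw, hmv⟩ := hl₀v v hv
      refine ⟨(mem_vars v).2 ⟨m, hm, Finsupp.mem_support_iff.2 hmv⟩, ?_, hvw⟩
      intro hvS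
      exact hmv (hmix m hm 0 hmw v hvS)
    have hr₁vars : ∀ v ∈ r₁.vars, v ∈ p.vars ∧ v ≠ g 0 := by
      intro v hv
      obtain ⟨m, hm, hvm⟩ := (mem_vars v).1 hv
      rw [Finsupp.mem_support_iff] at hvm
      constructor
      · rcases hr₁s m hm with h | h
        · exact (mem_vars v).2 ⟨m, h, Finsupp.mem_support_iff.2 hvm⟩
        · exact (hl₀vars v (h v hvm)).1
      · intro hvg
        rw [hvg] at hvm
        exact hvm (hr₁w m hm)
    have hmix₁ : ∀ m ∈ r₁.support, ∀ i : Fin n, m (g i.succ) ≠ 0 → ∀ s ∈ S, m s = 0 := by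
      intro m hm i hgi s hs
      rcases hr₁s m hm with h | h
      · exact hmix m h i.succ hgi s hs
      · by_contra hms
        exact ((hl₀vars s (h s hms)).2.1) hs
    obtain ⟨a', l', r, ha', hl'deg, hl'v, hrdeg, hrpos, hrv, heq₁⟩ :=
      ih (fun i => g i.succ) r₁ hr₁deg hr₁pos hmix₁
    refine ⟨Fin.cons a₀ a', Fin.cons l₀ l', r, ?_, ?_, ?_, hrdeg, hrpos, ?_, ?_⟩
    · intro i
      refine Fin.cases ?_ ?_ i
      · simpa using ha₀
      · intro j; simpa using ha' j
    · intro i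
      refine Fin.cases ?_ ?_ i
      · simpa using hl₀deg
      · intro j; simpa using hl'deg j
    · intro i
      refine Fin.cases ?_ ?_ i
      · intro w hw
        rw [Fin.cons_zero] at hw
        obtain ⟨h1, h2, h3⟩ := hl₀vars w hw
        refine ⟨h1, h2, ?_⟩
        intro i' hi'
        have : i' = 0 := le_antisymm hi' (Fin.zero_le i')
        rw [this]
        exact h3
      · intro j w hw
        rw [Fin.cons_succ] at hw
        obtain ⟨h1, h2, h3⟩ := hl'v j w hw
        refine ⟨(hr₁vars w h1).1, h2, ?_⟩
        intro i'
        refine Fin.cases ?_ ?_ i'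
        · intro _
          exact (hr₁vars w h1).2
        · intro j' hj'
          exact h3 j' (by rwa [Fin.succ_le_succ_iff] at hj')
    · intro w hw
      obtain ⟨h1, h2⟩ := hrv w hw
      refine ⟨(hr₁vars w h1).1, ?_⟩
      intro i
      refine Fin.cases ?_ ?_ i
      · exact (hr₁vars w h1).2
      · exact h2
    · rw [heq₀, heq₁, Fin.sum_univ_succ]
      simp only [Fin.cons_zero, Fin.cons_succ]
      ring


/-- Triangular decomposition of a quadratic SOS polynomial `h(x,y,z)` with no
mixed `yᵢ zⱼ` monomials:
`h = ∑ᵢ aᵢ (yᵢ − lᵢ(x, y₍>ᵢ₎))² + ∑ⱼ a₍ᵤ₊ⱼ₎ (zⱼ − l₍ᵤ₊ⱼ₎(x, z₍>ⱼ₎))²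
   + ∑ₖ a₍ᵤ₊ᵥ₊ₖ₎ (xₖ − l₍ᵤ₊ᵥ₊ₖ₎(x₍>ₖ₎))² + a₀`
with nonnegative coefficients and affine forms `l` in the indicated variables. -/
theorem sos_triangular_form (d u v : ℕ)
    (h : MvPolynomial (Fin d ⊕ Fin u ⊕ Fin v) ℝ)
    (hdeg : h.totalDegree ≤ 2) (hsos : IsSOS h)
    (hmixed : ∀ (i : Fin u) (j : Fin v),
      MvPolynomial.coeff
        (Finsupp.single (Sum.inr (Sum.inl i)) 1 + Finsupp.single (Sum.inr (Sum.inr j)) 1)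
        h = 0) :
    ∃ (ay : Fin u → ℝ) (ly : Fin u → MvPolynomial (Fin d ⊕ Fin u ⊕ Fin v) ℝ)
      (az : Fin v → ℝ) (lz : Fin v → MvPolynomial (Fin d ⊕ Fin u ⊕ Fin v) ℝ)
      (ax : Fin d → ℝ) (lx : Fin d → MvPolynomial (Fin d ⊕ Fin u ⊕ Fin v) ℝ)
      (a0 : ℝ),
      (∀ i, 0 ≤ ay i) ∧ (∀ j, 0 ≤ az j) ∧ (∀ k, 0 ≤ ax k) ∧ 0 ≤ a0 ∧
      (∀ i, (ly i).totalDegree ≤ 1 ∧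
        ∀ w ∈ (ly i).vars, (∃ k : Fin d, w = Sum.inl k) ∨
          (∃ i' : Fin u, i < i' ∧ w = Sum.inr (Sum.inl i'))) ∧
      (∀ j, (lz j).totalDegree ≤ 1 ∧
        ∀ w ∈ (lz j).vars, (∃ k : Fin d, w = Sum.inl k) ∨
          (∃ j' : Fin v, j < j' ∧ w = Sum.inr (Sum.inr j'))) ∧
      (∀ k, (lx k).totalDegree ≤ 1 ∧
        ∀ w ∈ (lx k).vars, ∃ k' : Fin d, k < k' ∧ w = Sum.inl k') ∧
      h = (∑ i, MvPolynomial.C (ay i) * (MvPolynomial.X (Sum.inr (Sum.inl i)) - ly i) ^ 2)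
        + (∑ j, MvPolynomial.C (az j) * (MvPolynomial.X (Sum.inr (Sum.inr j)) - lz j) ^ 2)
        + (∑ k, MvPolynomial.C (ax k) * (MvPolynomial.X (Sum.inl k) - lx k) ^ 2)
        + MvPolynomial.C a0 := by
  classical
  have hpos : ∀ x : (Fin d ⊕ Fin u ⊕ Fin v) → ℝ, 0 ≤ eval x h := by
    intro x
    obtain ⟨k, q, rfl⟩ := hsos
    rw [map_sum]
    apply Finset.sum_nonneg
    intro i _
    rw [map_pow]
    exact sq_nonneg _
  -- block 1 : the y variables
  set S : Set (Fin d ⊕ Fin u ⊕ Fin v) := {w | ∃ j : Fin v, w = Sum.inr (Sum.inr j)} with hSdef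
  have hmix1 : ∀ m ∈ h.support, ∀ i : Fin u,
      m ((Sum.inr (Sum.inl i)) : (Fin d ⊕ Fin u ⊕ Fin v)) ≠ 0 → ∀ s ∈ S, m s = 0 := by
    intro m hm i hmi s hs
    obtain ⟨j, rfl⟩ := hs
    by_contra hms
    have hab : (Sum.inr (Sum.inl i) : (Fin d ⊕ Fin u ⊕ Fin v)) ≠ Sum.inr (Sum.inr j) := by simp
    have hmsum : (m.sum fun _ n => n) ≤ 2 := (le_totalDegree hm).trans hdeg
    have := eq_single_add_single hab hmi hms hmsum
    rw [mem_support_iff, this] at hm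
    exact hm (hmixed i j)
  obtain ⟨ay, ly, r₁, hay, hlydeg, hlyv, hr₁deg, hr₁pos, hr₁v, heq₁⟩ :=
    elim_block S u (fun i => Sum.inr (Sum.inl i)) h hdeg hpos hmix1
  -- block 2 : the z variables
  obtain ⟨az, lz, r₂, haz, hlzdeg, hlzv, hr₂deg, hr₂pos, hr₂v, heq₂⟩ :=
    elim_block (∅ : Set (Fin d ⊕ Fin u ⊕ Fin v)) v (fun j => Sum.inr (Sum.inr j)) r₁ hr₁deg hr₁pos
      (by intro m _ i _ s hs; exact absurd hs (Set.notMem_empty s))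
  -- block 3 : the x variables
  obtain ⟨ax, lx, r₃, hax, hlxdeg, hlxv, _, hr₃pos, hr₃v, heq₃⟩ :=
    elim_block (∅ : Set (Fin d ⊕ Fin u ⊕ Fin v)) d (fun k => Sum.inl k) r₂ hr₂deg hr₂pos
      (by intro m _ i _ s hs; exact absurd hs (Set.notMem_empty s))
  -- r₃ is a constant
  have hr₃vars : ∀ w : (Fin d ⊕ Fin u ⊕ Fin v), w ∉ r₃.vars := by
    intro w hw
    obtain ⟨h3, hnx⟩ := hr₃v w hw
    obtain ⟨h2, hnz⟩ := hr₂v w h3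
    obtain ⟨_, hny⟩ := hr₁v w h2
    rcases w with k | i | j
    · exact hnx k rfl
    · exact hny i rfl
    · exact hnz j rfl
  have hr₃C : r₃ = C (coeff 0 r₃) := by
    ext m
    rcases eq_or_ne m 0 with rfl | hm
    · simp
    · rw [coeff_C, if_neg (Ne.symm hm)]
      by_contra hc
      obtain ⟨w, hw⟩ := Finsupp.ne_iff.1 hm
      rw [Finsupp.coe_zero, Pi.zero_apply] at hw
      exact hr₃vars w ((mem_vars w).2
        ⟨m, mem_support_iff.2 hc, Finsupp.mem_support_iff.2 hw⟩)
  have ha0 : 0 ≤ coeff 0 r₃ := by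
    have := hr₃pos (fun _ => 0)
    rw [hr₃C] at this
    rwa [eval_C] at this
  refine ⟨ay, ly, az, lz, ax, lx, coeff 0 r₃, hay, haz, hax, ha0, ?_, ?_, ?_, ?_⟩
  · intro i
    refine ⟨hlydeg i, ?_⟩
    intro w hw
    obtain ⟨_, hwS, hwg⟩ := hlyv i w hw
    rcases w with k | i' | j
    · exact Or.inl ⟨k, rfl⟩
    · refine Or.inr ⟨i', ?_, rfl⟩
      by_contra hii
      push_neg at hii
      exact hwg i' hii rfl
    · exact absurd ⟨j, rfl⟩ hwS
  · intro j
    refine ⟨hlzdeg j, ?_⟩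
    intro w hw
    obtain ⟨hw1, _, hwg⟩ := hlzv j w hw
    obtain ⟨_, hny⟩ := hr₁v w hw1
    rcases w with k | i | j'
    · exact Or.inl ⟨k, rfl⟩
    · exact absurd rfl (hny i)
    · refine Or.inr ⟨j', ?_, rfl⟩
      by_contra hjj
      push_neg at hjj
      exact hwg j' hjj rfl
  · intro k
    refine ⟨hlxdeg k, ?_⟩
    intro w hw
    obtain ⟨hw1, _, hwg⟩ := hlxv k w hw
    obtain ⟨hw2, hnz⟩ := hr₂v w hw1
    obtain ⟨_, hny⟩ := hr₁v w hw2
    rcases w with k' | i | j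
    · refine ⟨k', ?_, rfl⟩
      by_contra hkk
      push_neg at hkk
      exact hwg k' hkk rfl
    · exact absurd rfl (hny i)
    · exact absurd rfl (hnz j)
  · rw [heq₁, heq₂, heq₃, ← hr₃C]
    ring
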